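/- Let X, Y be n×r real matrices and T an r×r real matrix, and set Z = T(Yᵀ X). Then for every integer ℓ ≥ 0, φ_ℓ(X T Yᵀ) = (1/ℓ!)·I_n + X·(φ_{ℓ+1}(Z)·T)·Yᵀ. -/
import Mathlib

open Matrix

/-- The matrix φ-functions: `φ_ℓ(M) = Σ_{k=ℓ}^∞ M^{k-ℓ}/k! = Σ_{k=0}^∞ M^k/(k+ℓ)!`. -/
noncomputable def phiM {m : Type*} [Fintype m] [DecidableEq m] (ℓ : ℕ)
    (M : Matrix m m ℝ) : Matrix m m ℝ :=
  ∑' k : ℕ, ((Nat.factorial (k + ℓ) : ℝ))⁻¹ • M ^ k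

section aux

attribute [local instance] Matrix.linftyOpNormedAddCommGroup Matrix.linftyOpNormedRing
  Matrix.linftyOpNormedSpace Matrix.linftyOpNormedAlgebra

lemma phiM_summable {m : ℕ} (ℓ : ℕ) (M : Matrix (Fin m) (Fin m) ℝ) :
    Summable (fun k : ℕ => ((Nat.factorial (k + ℓ) : ℝ))⁻¹ • M ^ k) := by
  apply Summable.of_norm_bounded
    (g := fun k : ℕ => (‖(1 : Matrix (Fin m) (Fin m) ℝ)‖ + 1) * (‖M‖ ^ k / (Nat.factorial k)))
  · exact (Real.summable_pow_div_factorial ‖M‖).mul_left _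
  · intro k
    rw [norm_smul]
    have hfac : ((Nat.factorial (k + ℓ) : ℝ))⁻¹ ≤ ((Nat.factorial k : ℝ))⁻¹ := by
      apply inv_anti₀
      · exact_mod_cast Nat.factorial_pos k
      · exact_mod_cast Nat.factorial_le (Nat.le_add_right k ℓ)
    have h1 : ‖((Nat.factorial (k + ℓ) : ℝ))⁻¹‖ = ((Nat.factorial (k + ℓ) : ℝ))⁻¹ := by
      rw [Real.norm_eq_abs, abs_of_nonneg]; positivity
    rcases Nat.eq_zero_or_pos k with hk | hk
    · subst hk
      simp only [pow_zero, Nat.factorial_zero, Nat.cast_one, div_one, mul_one, h1]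
      have : ((Nat.factorial (0 + ℓ) : ℝ))⁻¹ ≤ 1 := by
        rw [inv_le_one_iff₀]; right; exact_mod_cast Nat.one_le_iff_ne_zero.mpr
          (Nat.factorial_pos (0 + ℓ)).ne'
      nlinarith [norm_nonneg (1 : Matrix (Fin m) (Fin m) ℝ),
        mul_le_of_le_one_left (norm_nonneg (1 : Matrix (Fin m) (Fin m) ℝ)) this]
    · have hpow : ‖M ^ k‖ ≤ ‖M‖ ^ k := norm_pow_le' M hk
      rw [h1]
      have h2 : ((Nat.factorial (k + ℓ) : ℝ))⁻¹ * ‖M ^ k‖ ≤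
          ((Nat.factorial k : ℝ))⁻¹ * ‖M‖ ^ k := by
        apply mul_le_mul hfac hpow (norm_nonneg _) (by positivity)
      calc ((Nat.factorial (k + ℓ) : ℝ))⁻¹ * ‖M ^ k‖ ≤ ((Nat.factorial k : ℝ))⁻¹ * ‖M‖ ^ k := h2
        _ = 1 * (‖M‖ ^ k / (Nat.factorial k)) := by ring
        _ ≤ (‖(1 : Matrix (Fin m) (Fin m) ℝ)‖ + 1) * (‖M‖ ^ k / (Nat.factorial k)) := by
            apply mul_le_mul_of_nonneg_right _ (by positivity)
            nlinarith [norm_nonneg (1 : Matrix (Fin m) (Fin m) ℝ)]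

lemma pow_succ_lowrank {n r : ℕ} (X Y : Matrix (Fin n) (Fin r) ℝ)
    (T Z : Matrix (Fin r) (Fin r) ℝ) (hZ : Z = T * (Yᵀ * X)) (k : ℕ) :
    (X * T * Yᵀ) ^ (k + 1) = X * (Z ^ k * T) * Yᵀ := by
  induction k with
  | zero => simp
  | succ k ih =>
    rw [pow_succ, ih, pow_succ, hZ]
    simp only [Matrix.mul_assoc]

end aux

theorem phiM_low_rank {n r : ℕ} (X Y : Matrix (Fin n) (Fin r) ℝ)
    (T : Matrix (Fin r) (Fin r) ℝ) (Z : Matrix (Fin r) (Fin r) ℝ)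
    (hZ : Z = T * (Yᵀ * X)) (ℓ : ℕ) :
    phiM ℓ (X * T * Yᵀ) =
      ((Nat.factorial ℓ : ℝ))⁻¹ • (1 : Matrix (Fin n) (Fin n) ℝ) +
        X * (phiM (ℓ + 1) Z * T) * Yᵀ := by
  letI := Matrix.linftyOpNormedAddCommGroup (α := ℝ) (m := Fin n) (n := Fin n)
  letI := Matrix.linftyOpNormedAddCommGroup (α := ℝ) (m := Fin r) (n := Fin r)
  letI := Matrix.linftyOpNormedSpace (R := ℝ) (α := ℝ) (m := Fin n) (n := Fin n)
  letI := Matrix.linftyOpNormedSpace (R := ℝ) (α := ℝ) (m := Fin r) (n := Fin r)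
  -- the continuous linear map M ↦ X * (M * T) * Yᵀ
  let L₀ : Matrix (Fin r) (Fin r) ℝ →ₗ[ℝ] Matrix (Fin n) (Fin n) ℝ :=
    { toFun := fun M => X * (M * T) * Yᵀ
      map_add' := fun M N => by noncomm_ring [Matrix.add_mul, Matrix.mul_add]
      map_smul' := fun c M => by
        simp [Matrix.smul_mul, Matrix.mul_smul] }
  let L : Matrix (Fin r) (Fin r) ℝ →L[ℝ] Matrix (Fin n) (Fin n) ℝ :=
    ⟨L₀, L₀.continuous_of_finiteDimensional⟩
  have hsum := phiM_summable ℓ (X * T * Yᵀ)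
  have hsumZ := phiM_summable (ℓ + 1) Z
  have h1 : phiM ℓ (X * T * Yᵀ) =
      ((Nat.factorial ℓ : ℝ))⁻¹ • (1 : Matrix (Fin n) (Fin n) ℝ) +
        ∑' k : ℕ, ((Nat.factorial (k + 1 + ℓ) : ℝ))⁻¹ • (X * T * Yᵀ) ^ (k + 1) := by
    rw [phiM, Summable.tsum_eq_zero_add hsum]
    simp
  rw [h1]
  congr 1
  have h2 : X * (phiM (ℓ + 1) Z * T) * Yᵀ = L (phiM (ℓ + 1) Z) := rfl
  rw [h2, phiM, L.map_tsum hsumZ]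
  apply tsum_congr
  intro k
  have he : k + 1 + ℓ = k + (ℓ + 1) := by omega
  rw [he, L.map_smul, pow_succ_lowrank X Y T Z hZ k]
  rfl
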